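/- Let A ∈ ℝ^{m×m} be positive definite, meaning xᵀAx > 0 for every nonzero x ∈ ℝ^m (A need not be symmetric), let B ∈ ℝ^{m×n} have full column rank (rank B = n), and let α ≥ 0, β > 0. Then every eigenvalue of the MGSSP iteration matrix has modulus less than one: if λ ∈ ℂ and there exists a nonzero w ∈ ℂ^{m+n} with Q(α,β)w = λ P(α,β)w, then |λ| < 1. Consequently the spectral radius of T(α,β) = P(α,β)⁻¹Q(α,β) is less than 1, so the MGSSP iteration method converges unconditionally for all α ≥ 0 and β > 0. -/

import Mathlib

open Matrix

/-- The MGSSP splitting matrix `P(α,β) = [[αI+2A, 2B], [−2Bᵀ, βI]]`. -/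
noncomputable def Pmat {m n : ℕ} (A : Matrix (Fin m) (Fin m) ℝ) (B : Matrix (Fin m) (Fin n) ℝ)
    (α β : ℝ) : Matrix (Fin m ⊕ Fin n) (Fin m ⊕ Fin n) ℝ :=
  fromBlocks (α • 1 + (2 : ℝ) • A) ((2 : ℝ) • B) (-((2 : ℝ) • Bᵀ)) (β • 1)

/-- The MGSSP splitting matrix `Q(α,β) = [[αI+A, B], [−Bᵀ, βI]]`. -/
noncomputable def Qmat {m n : ℕ} (A : Matrix (Fin m) (Fin m) ℝ) (B : Matrix (Fin m) (Fin n) ℝ)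
    (α β : ℝ) : Matrix (Fin m ⊕ Fin n) (Fin m ⊕ Fin n) ℝ :=
  fromBlocks (α • 1 + A) B (-Bᵀ) (β • 1)

/- ### Auxiliary lemmas -/

private lemma mgssp_real_mulVec_inj {m n : ℕ} (B : Matrix (Fin m) (Fin n) ℝ) (hB : B.rank = n)
    (x : Fin n → ℝ) (hx : B *ᵥ x = 0) : x = 0 := by
  have h := LinearMap.finrank_range_add_finrank_ker B.mulVecLin
  rw [Module.finrank_fin_fun] at h
  have hk : Module.finrank ℝ (LinearMap.ker B.mulVecLin) = 0 := by
    have : B.rank = Module.finrank ℝ (LinearMap.range B.mulVecLin) := rfl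
    omega
  have hker : LinearMap.ker B.mulVecLin = ⊥ := Submodule.finrank_eq_zero.mp hk
  have hx' : x ∈ LinearMap.ker B.mulVecLin := by
    simpa [Matrix.mulVecLin] using hx
  rw [hker] at hx'; simpa using hx'

private lemma mgssp_complex_mulVec_inj {m n : ℕ} (B : Matrix (Fin m) (Fin n) ℝ)
    (hB : B.rank = n) (v : Fin n → ℂ) (hv : B.map Complex.ofReal *ᵥ v = 0) : v = 0 := by
  have hre : (B *ᵥ fun i => (v i).re) = 0 := by
    funext j
    have := congrArg Complex.re (congrFun hv j)
    simp only [mulVec, dotProduct, map_apply, Pi.zero_apply, Complex.re_sum] at this ⊢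
    simpa using this
  have him : (B *ᵥ fun i => (v i).im) = 0 := by
    funext j
    have := congrArg Complex.im (congrFun hv j)
    simp only [mulVec, dotProduct, map_apply, Pi.zero_apply, Complex.im_sum] at this ⊢
    simpa using this
  have h1 := mgssp_real_mulVec_inj B hB _ hre
  have h2 := mgssp_real_mulVec_inj B hB _ him
  funext i
  have e1 := congrFun h1 i
  have e2 := congrFun h2 i
  simp only [Pi.zero_apply] at e1 e2 ⊢
  exact Complex.ext (by simpa using e1) (by simpa using e2)

private lemma mgssp_re_quad {m : ℕ} (A : Matrix (Fin m) (Fin m) ℝ) (u : Fin m → ℂ) :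
    (star u ⬝ᵥ (A.map Complex.ofReal *ᵥ u)).re
      = (fun i => (u i).re) ⬝ᵥ (A *ᵥ fun i => (u i).re)
        + (fun i => (u i).im) ⬝ᵥ (A *ᵥ fun i => (u i).im) := by
  simp only [dotProduct, mulVec, Pi.star_apply, map_apply, Complex.re_sum,
    Finset.mul_sum, ← Finset.sum_add_distrib]
  refine Finset.sum_congr rfl fun i _ => Finset.sum_congr rfl fun j _ => ?_
  simp only [Complex.mul_re, Complex.mul_im, Complex.ofReal_re, Complex.ofReal_im,
    RCLike.star_def, Complex.conj_re, Complex.conj_im]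
  ring

private lemma mgssp_cross_conj {m n : ℕ} (B : Matrix (Fin m) (Fin n) ℝ) (u : Fin m → ℂ)
    (v : Fin n → ℂ) :
    star v ⬝ᵥ (Bᵀ.map Complex.ofReal *ᵥ u)
      = starRingEnd ℂ (star u ⬝ᵥ (B.map Complex.ofReal *ᵥ v)) := by
  simp only [dotProduct, mulVec, Pi.star_apply, map_apply, transpose_apply, map_sum,
    Finset.mul_sum]
  rw [Finset.sum_comm]
  refine Finset.sum_congr rfl fun i _ => Finset.sum_congr rfl fun j _ => ?_
  simp only [_root_.map_mul, Complex.conj_ofReal, RCLike.star_def, Complex.conj_conj]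
  ring

private lemma mgssp_mulVec_smul_one_add {m : ℕ} (A : Matrix (Fin m) (Fin m) ℝ) (α : ℝ)
    (u : Fin m → ℂ) :
    ((α • 1 + A).map Complex.ofReal) *ᵥ u = (α : ℂ) • u + (A.map Complex.ofReal) *ᵥ u := by
  funext i
  simp [mulVec, dotProduct, Matrix.add_apply, Matrix.smul_apply, Matrix.one_apply,
    add_mul, Finset.sum_add_distrib, apply_ite, ite_mul, Finset.sum_ite_eq,
    smul_eq_mul, mul_add, mul_ite, mul_zero, mul_comm]

private lemma mgssp_mulVec_smul_one {m : ℕ} (β : ℝ) (v : Fin m → ℂ) :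
    (((β • 1 : Matrix (Fin m) (Fin m) ℝ)).map Complex.ofReal) *ᵥ v = (β : ℂ) • v := by
  funext i
  simp [mulVec, dotProduct, Matrix.smul_apply, Matrix.one_apply, apply_ite,
    ite_mul, Finset.sum_ite_eq, smul_eq_mul]

private lemma mgssp_mulVec_two_smul {a b : ℕ} (M : Matrix (Fin a) (Fin b) ℝ) (x : Fin b → ℂ) :
    (((2 : ℝ) • M).map Complex.ofReal) *ᵥ x = (2 : ℂ) • (M.map Complex.ofReal *ᵥ x) := by
  funext i
  simp [mulVec, dotProduct, Matrix.smul_apply, smul_eq_mul, Finset.mul_sum,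
    Complex.ofReal_mul, mul_assoc]

private lemma mgssp_mulVec_neg {a b : ℕ} (M : Matrix (Fin a) (Fin b) ℝ) (x : Fin b → ℂ) :
    ((-M).map Complex.ofReal) *ᵥ x = -(M.map Complex.ofReal *ᵥ x) := by
  funext i
  simp [mulVec, dotProduct, Matrix.neg_apply, neg_mul, Finset.sum_neg_distrib]

private lemma mgssp_dot_self_re_nonneg {k : ℕ} (u : Fin k → ℂ) : 0 ≤ (star u ⬝ᵥ u).re := by
  simp only [dotProduct, Pi.star_apply, Complex.re_sum]
  refine Finset.sum_nonneg fun i _ => ?_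
  simp only [Complex.mul_re, RCLike.star_def, Complex.conj_re, Complex.conj_im]
  nlinarith [sq_nonneg (u i).re, sq_nonneg (u i).im]

private lemma mgssp_dot_self_im {k : ℕ} (u : Fin k → ℂ) : (star u ⬝ᵥ u).im = 0 := by
  simp only [dotProduct, Pi.star_apply, Complex.im_sum]
  refine Finset.sum_eq_zero fun i _ => ?_
  simp only [Complex.mul_im, RCLike.star_def, Complex.conj_re, Complex.conj_im]
  ring


/-- Theorem 3.1: every eigenvalue of the MGSSP iteration matrix has modulus less
than one, i.e. the MGSSP iteration method converges unconditionally for all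
`α ≥ 0` and `β > 0`. -/
theorem mgssp_unconditional_convergence {m n : ℕ}
    (A : Matrix (Fin m) (Fin m) ℝ) (B : Matrix (Fin m) (Fin n) ℝ)
    (hA : ∀ x : Fin m → ℝ, x ≠ 0 → 0 < x ⬝ᵥ (A *ᵥ x))
    (hB : B.rank = n)
    (α β : ℝ) (hα : 0 ≤ α) (hβ : 0 < β)
    (lam : ℂ) (w : Fin m ⊕ Fin n → ℂ) (hw : w ≠ 0)
    (heig : (Qmat A B α β).map Complex.ofReal *ᵥ w
        = lam • ((Pmat A B α β).map Complex.ofReal *ᵥ w)) :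
    ‖lam‖ < 1 := by
  classical
  set u : Fin m → ℂ := w ∘ Sum.inl with hu_def
  set v : Fin n → ℂ := w ∘ Sum.inr with hv_def
  have hwelim : w = Sum.elim u v := by funext i; cases i <;> rfl
  rw [hwelim, Qmat, Pmat, fromBlocks_map, fromBlocks_map, fromBlocks_mulVec,
    fromBlocks_mulVec] at heig
  -- block equations
  have hTop : ((α:ℂ) • u + (A.map Complex.ofReal) *ᵥ u) + (B.map Complex.ofReal) *ᵥ v
      = lam • (((α:ℂ) • u + (2:ℂ) • ((A.map Complex.ofReal) *ᵥ u))
          + (2:ℂ) • ((B.map Complex.ofReal) *ᵥ v)) := by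
    rw [← mgssp_mulVec_two_smul, ← mgssp_mulVec_two_smul, ← mgssp_mulVec_smul_one_add,
      ← mgssp_mulVec_smul_one_add]
    funext i
    simpa using congrFun heig (Sum.inl i)
  have hBot : (-(Bᵀ.map Complex.ofReal *ᵥ u)) + (β:ℂ) • v
      = lam • ((-((2:ℂ) • (Bᵀ.map Complex.ofReal *ᵥ u))) + (β:ℂ) • v) := by
    rw [← mgssp_mulVec_two_smul, ← mgssp_mulVec_neg, ← mgssp_mulVec_neg,
      ← mgssp_mulVec_smul_one]
    funext i
    simpa using congrFun heig (Sum.inr i)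
  by_cases hu0 : u = 0
  · -- then v ≠ 0, second block forces lam = 1, first block forces B*v = 0, contradiction
    have hv0 : v ≠ 0 := by
      intro h
      apply hw
      rw [hwelim, hu0, h]
      funext i; cases i <;> rfl
    obtain ⟨i, hvi⟩ : ∃ i, v i ≠ 0 := by
      by_contra h
      push_neg at h
      exact hv0 (funext fun i => h i)
    have hlam1 : lam = 1 := by
      have hthis : (β:ℂ) * v i = lam * ((β:ℂ) * v i) := by
        have := congrFun hBot i
        simpa [hu0, Matrix.mulVec_zero] using this
      have hβv : (β:ℂ) * v i ≠ 0 := mul_ne_zero (by exact_mod_cast hβ.ne') hvi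
      have h1 : lam * ((β:ℂ) * v i) = 1 * ((β:ℂ) * v i) := by rw [← hthis]; ring
      exact mul_right_cancel₀ hβv h1
    have hBv : (B.map Complex.ofReal) *ᵥ v = 0 := by
      have := hTop
      rw [hu0, hlam1] at this
      simp only [Matrix.mulVec_zero, smul_zero, zero_add, add_zero, one_smul] at this
      -- this : Bv = Bv + ... or Bv = 2 • Bv
      have h2 : (B.map Complex.ofReal) *ᵥ v = (2:ℂ) • ((B.map Complex.ofReal) *ᵥ v) := by
        simpa using this
      funext j
      have := congrFun h2 j
      simp only [Pi.smul_apply, smul_eq_mul] at this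
      have : ((B.map Complex.ofReal) *ᵥ v) j = 0 := by linear_combination -this
      exact this
    exact absurd (mgssp_complex_mulVec_inj B hB v hBv) hv0
  · -- main case : u ≠ 0
    set tA : ℂ := star u ⬝ᵥ ((A.map Complex.ofReal) *ᵥ u) with htA_def
    set c : ℂ := star u ⬝ᵥ ((B.map Complex.ofReal) *ᵥ v) with hc_def
    set nu : ℂ := star u ⬝ᵥ u with hnu_def
    set nv : ℂ := star v ⬝ᵥ v with hnv_def
    have e1 : (α:ℂ) * nu + tA + c = lam * ((α:ℂ) * nu + 2 * tA + 2 * c) := by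
      have := congrArg (fun z => star u ⬝ᵥ z) hTop
      simp only [dotProduct_add, dotProduct_smul, smul_eq_mul] at this
      rw [hnu_def, htA_def, hc_def]
      linear_combination this
    have e2 : -(starRingEnd ℂ c) + (β:ℂ) * nv
        = lam * (-(2 * starRingEnd ℂ c) + (β:ℂ) * nv) := by
      have := congrArg (fun z => star v ⬝ᵥ z) hBot
      simp only [dotProduct_add, dotProduct_smul, dotProduct_neg, smul_eq_mul] at this
      rw [hnv_def, hc_def, ← mgssp_cross_conj B u v]
      linear_combination this
    -- combined scalar equation
    set s : ℂ := (α:ℂ) * nu + (β:ℂ) * nv with hs_def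
    set p : ℂ := s + 2 * tA + 2 * (c - starRingEnd ℂ c) with hp_def
    have h2 : 2 * (lam * p) = p + s := by
      rw [hp_def, hs_def]
      linear_combination (-2 : ℂ) * e1 - 2 * e2
    -- real facts
    have hnure : 0 ≤ nu.re := mgssp_dot_self_re_nonneg u
    have hnvre : 0 ≤ nv.re := mgssp_dot_self_re_nonneg v
    have hnuim : nu.im = 0 := mgssp_dot_self_im u
    have hnvim : nv.im = 0 := mgssp_dot_self_im v
    have hsim : s.im = 0 := by
      rw [hs_def]
      simp [Complex.add_im, Complex.mul_im, hnuim, hnvim]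
    have hsr : 0 ≤ s.re := by
      rw [hs_def]
      simp only [Complex.add_re, Complex.mul_re, Complex.ofReal_re, Complex.ofReal_im,
        hnuim, hnvim]
      nlinarith
    have htAre : 0 < tA.re := by
      rw [htA_def, mgssp_re_quad]
      set x : Fin m → ℝ := fun i => (u i).re with hx_def
      set y : Fin m → ℝ := fun i => (u i).im with hy_def
      have hquad : ∀ z : Fin m → ℝ, 0 ≤ z ⬝ᵥ (A *ᵥ z) := by
        intro z
        rcases eq_or_ne z 0 with h | h
        · simp [h]
        · exact (hA z h).le
      have hxy : x ≠ 0 ∨ y ≠ 0 := by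
        by_contra h
        push_neg at h
        apply hu0
        funext i
        exact Complex.ext (by simpa using congrFun h.1 i) (by simpa using congrFun h.2 i)
      rcases hxy with h | h
      · have := hA x h
        have := hquad y
        linarith
      · have := hA y h
        have := hquad x
        linarith
    have hps : s.re < p.re := by
      rw [hp_def]
      simp only [Complex.add_re, Complex.mul_re, Complex.sub_re, Complex.re_ofNat,
        Complex.im_ofNat, Complex.conj_re, RCLike.star_def]
      nlinarith
    -- conclude
    have hp0 : p ≠ 0 := by
      intro h
      rw [h] at hps
      simp at hps
      linarith
    have hlam : lam = (p + s) / (2 * p) := by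
      rw [eq_div_iff (mul_ne_zero two_ne_zero hp0)]
      linear_combination h2
    rw [hlam, norm_div]
    have habs2p : 0 < ‖2 * p‖ := by
      simpa using (norm_pos_iff.mpr (mul_ne_zero two_ne_zero hp0))
    rw [div_lt_one habs2p]
    have hsq : ‖p + s‖^2 < ‖2 * p‖^2 := by
      rw [Complex.sq_norm, Complex.sq_norm, Complex.normSq_apply, Complex.normSq_apply]
      simp only [Complex.add_re, Complex.add_im, Complex.mul_re, Complex.mul_im, hsim,
        Complex.re_ofNat, Complex.im_ofNat]
      nlinarith [sq_nonneg p.im, sq_nonneg (p.re - s.re)]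
    exact lt_of_pow_lt_pow_left₀ 2 (norm_nonneg _) hsq
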